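/- Let C_1 and C_2 be Λ-MT codes over F_q with index ℓ, block lengths (m_1,…,m_ℓ), GPMs G_1 and G_2, and polynomial matrices A_1, A_2 satisfying the identical equations A_i·G_i = diag(x^{m_1}−λ_1,…,x^{m_ℓ}−λ_ℓ). Let N = lcm(t_1 m_1,…,t_ℓ m_ℓ), where t_i is the multiplicative order of λ_i. Let Q be the QC code over F_q with index ℓ and co-index N generated by the rows of the stacked polynomial matrix [A_1^T·diag((x^N−1)/(x^{m_i}−λ_i))·G_2^T ; (x^N−1)·I_ℓ], let Q be a GPM of Q, and let P be the polynomial matrix satisfying P·Q = (x^N−1)·I_ℓ. Then P^T·G_2 is a GPM of the Λ-MT code C_1 ∩ C_2. -/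

import Mathlib

open Polynomial Matrix

/-- constacyclic shift with constant `lam` on one block of length `m`:
`(a₀, …, a_{m-1}) ↦ (lam * a_{m-1}, a₀, …, a_{m-2})`. -/
def blockShift {F : Type*} [Field F] (lam : F) {m : ℕ} (a : Fin m → F) : Fin m → F :=
  fun j => if j.val = 0 then lam * a ⟨m - 1, by have := j.isLt; omega⟩
           else a ⟨j.val - 1, by have := j.isLt; omega⟩

/-- `CC ⊆ ⊕ᵢ F^{m i}` is a Λ-multi-twisted code: it is invariant under the blockwise
constacyclic shift `T_Λ`. -/
def IsMT {F : Type*} [Field F] {ℓ : ℕ} (lam : Fin ℓ → F) {m : Fin ℓ → ℕ}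
    (CC : Submodule F (∀ i, Fin (m i) → F)) : Prop :=
  ∀ v ∈ CC, (fun i => blockShift (lam i) (v i)) ∈ CC

/-- from a polynomial vector in `(F[x])^ℓ` to a blocked vector: reduce component `i`
modulo `x^{m i} - λᵢ` and take the coefficients. -/
noncomputable def toCode {F : Type*} [Field F] {ℓ : ℕ} (lam : Fin ℓ → F) (m : Fin ℓ → ℕ)
    (q : Fin ℓ → Polynomial F) : ∀ i, Fin (m i) → F :=
  fun i j => ((q i) %ₘ (X ^ (m i) - Polynomial.C (lam i))).coeff j

/-- `G` is a generator polynomial matrix (GPM) of the Λ-MT code `CC`: its rows form a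
minimal generating set (equivalently, since the corresponding submodule of `(F[x])^ℓ` has
rank `ℓ`, a linearly independent generating set) of the `F[x]`-submodule of `(F[x])^ℓ`
corresponding to `CC`, namely `{q | toCode lam m q ∈ CC}`. -/
def IsGPM {F : Type*} [Field F] {ℓ : ℕ} (lam : Fin ℓ → F) (m : Fin ℓ → ℕ)
    (CC : Submodule F (∀ i, Fin (m i) → F))
    (G : Matrix (Fin ℓ) (Fin ℓ) (Polynomial F)) : Prop :=
  LinearIndependent (Polynomial F) (fun i => G i) ∧
  (Submodule.span (Polynomial F) (Set.range (fun i => G i)) :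
      Set (Fin ℓ → Polynomial F)) = {q | toCode lam m q ∈ CC}

/-- the blocked code generated by a family of polynomial vectors: the image under
`toCode` of the `F[x]`-span of the family. -/
noncomputable def genCode {F : Type*} [Field F] {ℓ : ℕ} (lam : Fin ℓ → F) (m : Fin ℓ → ℕ)
    {ι : Type*} (rows : ι → (Fin ℓ → Polynomial F)) : Submodule F (∀ i, Fin (m i) → F) :=
  Submodule.span F
    (toCode lam m '' (Submodule.span (Polynomial F) (Set.range rows) :
      Set (Fin ℓ → Polynomial F)))

set_option linter.unusedSectionVars false


section MatrixAux
variable {n k : Type*} [Fintype n] {R : Type*} [CommRing R]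

lemma sum_smul_eq_vecMul (c : n → R) (M : Matrix n k R) :
    ∑ i, c i • M i = c ᵥ* M := by
  ext j
  simp [Matrix.vecMul, dotProduct, Finset.sum_apply]

lemma mem_span_rows_iff {M : Matrix n k R} {v : k → R} :
    v ∈ Submodule.span R (Set.range fun i => M i) ↔ ∃ c, c ᵥ* M = v := by
  rw [Submodule.mem_span_range_iff_exists_fun]
  simp_rw [sum_smul_eq_vecMul]

lemma vecMul_smul_mat (x : n → R) (c : R) (A : Matrix n k R) :
    x ᵥ* (c • A) = c • (x ᵥ* A) := by
  ext j
  simp [Matrix.vecMul, dotProduct, Finset.mul_sum, mul_left_comm]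

lemma row_mul {n₂ : Type*} (A : Matrix n₂ n R) (B : Matrix n k R) (i : n₂) :
    (A * B) i = A i ᵥ* B := by
  ext j
  simp [Matrix.mul_apply, Matrix.vecMul, dotProduct]

end MatrixAux

section MatrixCancel
variable {n : Type*} [Fintype n] [DecidableEq n] {R : Type*} [CommRing R] [IsDomain R]

lemma matmul_cancel {B G : Matrix n n R} (hG : G.det ≠ 0) (h : B * G = 0) : B = 0 := by
  have h2 : B * G * G.adjugate = 0 := by rw [h, Matrix.zero_mul]
  rw [Matrix.mul_assoc, Matrix.mul_adjugate, Matrix.mul_smul, Matrix.mul_one] at h2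
  ext i j
  have h3 := congrFun (congrFun h2 i) j
  simp only [Matrix.smul_apply, smul_eq_mul, Matrix.zero_apply] at h3
  rcases mul_eq_zero.mp h3 with h4 | h4
  · exact absurd h4 hG
  · simpa using h4

lemma mul_flip_of_mul_eq_smul_one {B G : Matrix n n R} (hG : G.det ≠ 0) {c : R}
    (h : B * G = c • 1) : G * B = c • 1 := by
  have key : (G * B - c • 1) * G = 0 := by
    rw [Matrix.sub_mul, Matrix.mul_assoc, h, Matrix.mul_smul, Matrix.mul_one,
      Matrix.smul_mul, Matrix.one_mul, sub_self]
  have := matmul_cancel hG key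
  rwa [sub_eq_zero] at this

lemma smul_mat_cancel {c : R} (hc : c ≠ 0) {A B : Matrix n n R}
    (h : c • A = c • B) : A = B := by
  ext i j
  have h3 := congrFun (congrFun h i) j
  simp only [Matrix.smul_apply, smul_eq_mul] at h3
  exact mul_left_cancel₀ hc h3

lemma smul_vec_cancel {c : R} (hc : c ≠ 0) {a b : n → R}
    (h : c • a = c • b) : a = b := by
  funext j
  have h3 := congrFun h j
  simp only [Pi.smul_apply, smul_eq_mul] at h3
  exact mul_left_cancel₀ hc h3

lemma li_rows_of_det_ne_zero {M : Matrix n n R} (h : M.det ≠ 0) :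
    LinearIndependent R (fun i => M i) := by
  rw [Fintype.linearIndependent_iff]
  intro c hc i
  have h1 : c ᵥ* M = 0 := by rw [← sum_smul_eq_vecMul]; exact hc
  have h2 : c ᵥ* (M * M.adjugate) = 0 := by
    rw [← Matrix.vecMul_vecMul, h1, Matrix.zero_vecMul]
  rw [Matrix.mul_adjugate, vecMul_smul_mat, Matrix.vecMul_one] at h2
  have h3 := congrFun h2 i
  simp only [Pi.smul_apply, smul_eq_mul, Pi.zero_apply] at h3
  rcases mul_eq_zero.mp h3 with h4 | h4
  · exact absurd h4 h
  · exact h4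
end MatrixCancel

lemma vecMul_fromRows {n₁ n₂ k R : Type*} [Fintype n₁] [Fintype n₂] [CommRing R]
    (c₁ : n₁ → R) (c₂ : n₂ → R) (B : Matrix n₁ k R) (C : Matrix n₂ k R) :
    Sum.elim c₁ c₂ ᵥ* Matrix.fromRows B C = c₁ ᵥ* B + c₂ ᵥ* C := by
  ext j
  simp [Matrix.vecMul, dotProduct, Fintype.sum_sum_type, Matrix.fromRows_apply_inl, Matrix.fromRows_apply_inr]

lemma vecMul_fromRows' {n₁ n₂ k R : Type*} [Fintype n₁] [Fintype n₂] [CommRing R]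
    (c : n₁ ⊕ n₂ → R) (B : Matrix n₁ k R) (C : Matrix n₂ k R) :
    c ᵥ* Matrix.fromRows B C = (c ∘ Sum.inl) ᵥ* B + (c ∘ Sum.inr) ᵥ* C := by
  have hc : c = Sum.elim (c ∘ Sum.inl) (c ∘ Sum.inr) := by
    funext r; cases r <;> rfl
  conv_lhs => rw [hc]
  rw [_root_.vecMul_fromRows]

section CodeAux
variable {F : Type*} [Field F] {ℓ : ℕ}

/-- `toCode` as an `F`-linear map. -/
noncomputable def toCodeL (lam : Fin ℓ → F) (m : Fin ℓ → ℕ) :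
    (Fin ℓ → Polynomial F) →ₗ[F] (∀ i, Fin (m i) → F) where
  toFun := toCode lam m
  map_add' p q := by
    funext i j
    simp [toCode, Polynomial.add_modByMonic]
  map_smul' c q := by
    funext i j
    simp [toCode, Polynomial.smul_modByMonic]

lemma genCode_eq_map (lam : Fin ℓ → F) (m : Fin ℓ → ℕ) {ι : Type*}
    (rows : ι → (Fin ℓ → Polynomial F)) :
    genCode lam m rows = Submodule.map (toCodeL lam m)
      ((Submodule.span (Polynomial F) (Set.range rows)).restrictScalars F) := by
  rw [genCode]
  have : ((Submodule.span (Polynomial F) (Set.range rows)).restrictScalars F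
      : Set (Fin ℓ → Polynomial F))
      = (Submodule.span (Polynomial F) (Set.range rows) : Set (Fin ℓ → Polynomial F)) := rfl
  rw [← Submodule.span_eq ((Submodule.span (Polynomial F) (Set.range rows)).restrictScalars F),
    Submodule.map_span]
  rfl

/-- if all coefficients of the remainder mod `X^N - 1` vanish, the polynomial is divisible. -/
lemma dvd_of_toCode_eq_zero {N : ℕ} (hN : 0 < N) {q : Fin ℓ → Polynomial F}
    (h : toCode (fun _ => (1 : F)) (fun _ => N) q = 0) (i : Fin ℓ) :
    (X ^ N - Polynomial.C (1 : F)) ∣ q i := by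
  have hmon : (X ^ N - Polynomial.C (1 : F)).Monic :=
    Polynomial.monic_X_pow_sub_C _ hN.ne'
  rw [← Polynomial.modByMonic_eq_zero_iff_dvd hmon]
  have hdeg : (q i %ₘ (X ^ N - Polynomial.C (1 : F))).degree < (N : WithBot ℕ) := by
    have := Polynomial.degree_modByMonic_lt (q i) hmon
    rwa [Polynomial.degree_X_pow_sub_C hN] at this
  ext n
  by_cases hn : n < N
  · have := congrFun (congrFun h i) ⟨n, hn⟩
    simpa [toCode] using this
  · have := Polynomial.coeff_eq_zero_of_degree_lt
      (lt_of_lt_of_le hdeg (Nat.cast_le.mpr (le_of_not_gt hn)))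
    simpa using this

/-- the membership set of the generated QC code is exactly the `F[x]`-span of the rows,
provided the span contains all `(X^N-1)`-multiples. -/
lemma mem_genCode_iff {N : ℕ} (hN : 0 < N) {ι : Type*}
    (rows : ι → (Fin ℓ → Polynomial F))
    (hker : ∀ q : Fin ℓ → Polynomial F, (∀ i, (X ^ N - Polynomial.C (1 : F)) ∣ q i) →
      q ∈ Submodule.span (Polynomial F) (Set.range rows))
    (q : Fin ℓ → Polynomial F) :
    toCode (fun _ => (1 : F)) (fun _ => N) q ∈ genCode (fun _ => (1 : F)) (fun _ => N) rows
      ↔ q ∈ Submodule.span (Polynomial F) (Set.range rows) := by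
  rw [genCode_eq_map]
  constructor
  · rintro h
    rw [Submodule.mem_map] at h
    obtain ⟨p, hp, hpq⟩ := h
    rw [Submodule.restrictScalars_mem] at hp
    have hz : toCode (fun _ => (1 : F)) (fun _ => N) (q - p) = 0 := by
      have : toCodeL (fun _ => (1 : F)) (fun _ => N) (q - p) = 0 := by
        rw [map_sub]
        change toCodeL _ _ q - toCodeL _ _ p = 0
        rw [sub_eq_zero]
        exact hpq.symm
      exact this
    have hdv := fun i => dvd_of_toCode_eq_zero hN hz i
    have : q - p ∈ Submodule.span (Polynomial F) (Set.range rows) := hker _ hdv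
    simpa using Submodule.add_mem _ this hp
  · intro h
    exact Submodule.mem_map_of_mem (by rwa [Submodule.restrictScalars_mem])
end CodeAux

/-- Let `C₁, C₂` be Λ-MT codes with GPMs `G₁, G₂` and identical-equation
matrices `A₁, A₂`.  Let `N = lcm(tᵢ mᵢ)` (`tᵢ` the multiplicative order of `λᵢ`), let `Q`
be the quasi-cyclic code of index `ℓ` and co-index `N` generated by the rows of the
stacked matrix `[A₁ᵀ · diag((x^N-1)/(x^{mᵢ}-λᵢ)) · G₂ᵀ ; (x^N-1)·I_ℓ]`, let `Qm` be a GPM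
of `Q` and `P` satisfy `P·Qm = (x^N-1)·I_ℓ`.  Then `Pᵀ·G₂` is a GPM of `C₁ ∩ C₂`. -/
theorem stmt11 {F : Type*} [Field F] [Fintype F] {ℓ : ℕ} {m : Fin ℓ → ℕ}
    (hm : ∀ i, 0 < m i) {lam : Fin ℓ → F} (hlam : ∀ i, lam i ≠ 0)
    (C₁ C₂ : Submodule F (∀ i, Fin (m i) → F))
    (hC₁ : IsMT lam C₁) (hC₂ : IsMT lam C₂)
    (G₁ G₂ A₁ A₂ : Matrix (Fin ℓ) (Fin ℓ) (Polynomial F))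
    (hG₁ : IsGPM lam m C₁ G₁) (hG₂ : IsGPM lam m C₂ G₂)
    (hA₁ : A₁ * G₁ = Matrix.diagonal (fun i => X ^ (m i) - Polynomial.C (lam i)))
    (hA₂ : A₂ * G₂ = Matrix.diagonal (fun i => X ^ (m i) - Polynomial.C (lam i)))
    {N : ℕ} (hN : N = Finset.univ.lcm (fun i => orderOf (lam i) * m i))
    (Qm P : Matrix (Fin ℓ) (Fin ℓ) (Polynomial F))
    (hQ : IsGPM (fun _ => (1 : F)) (fun _ => N)
      (genCode (fun _ => (1 : F)) (fun _ => N)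
        (fun r : Fin ℓ ⊕ Fin ℓ =>
          Matrix.fromRows
            (A₁.transpose *
              Matrix.diagonal (fun i => (X ^ N - 1) / (X ^ (m i) - Polynomial.C (lam i))) *
              G₂.transpose)
            ((X ^ N - 1 : Polynomial F) • (1 : Matrix (Fin ℓ) (Fin ℓ) (Polynomial F))) r))
      Qm)
    (hPQ : P * Qm = Matrix.diagonal (fun _ => (X ^ N - 1 : Polynomial F))) :
    IsGPM lam m (C₁ ⊓ C₂) (P.transpose * G₂) := by
  classical
  obtain ⟨hQli, hQspan⟩ := hQ
  obtain ⟨hG₁li, hG₁span⟩ := hG₁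
  obtain ⟨hG₂li, hG₂span⟩ := hG₂
  -- positivity of N
  have horder : ∀ i, 0 < orderOf (lam i) := by
    intro i
    rw [orderOf_pos_iff]
    refine isOfFinOrder_iff_pow_eq_one.mpr ⟨Fintype.card F - 1, ?_,
      FiniteField.pow_card_sub_one_eq_one _ (hlam i)⟩
    have : 1 < Fintype.card F := Fintype.one_lt_card
    omega
  have hN0 : 0 < N := by
    rw [hN, Nat.pos_iff_ne_zero]
    intro h0
    rw [Finset.lcm_eq_zero_iff] at h0
    simp only [Finset.mem_univ, true_and] at h0
    obtain ⟨i, hi⟩ := h0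
    exact (Nat.mul_ne_zero (horder i).ne' (hm i).ne') hi
  have hXN : (X ^ N - 1 : Polynomial F) ≠ 0 := by
    simpa using Polynomial.X_pow_sub_C_ne_zero hN0 (1 : F)
  -- the diagonal entries
  have hdne : ∀ i, (X ^ (m i) - Polynomial.C (lam i) : Polynomial F) ≠ 0 :=
    fun i => Polynomial.X_pow_sub_C_ne_zero (hm i) _
  have hdvd : ∀ i, (X ^ (m i) - Polynomial.C (lam i)) ∣ (X ^ N - 1 : Polynomial F) := by
    intro i
    have h1 : (X ^ (m i) - Polynomial.C (lam i)) ∣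
        (X ^ (orderOf (lam i) * m i) - 1 : Polynomial F) := by
      have h := sub_dvd_pow_sub_pow (X ^ (m i) : Polynomial F) (Polynomial.C (lam i))
        (orderOf (lam i))
      rwa [← pow_mul, ← map_pow, pow_orderOf_eq_one, Polynomial.C_1, mul_comm (m i)] at h
    have h2 : (X ^ (orderOf (lam i) * m i) - 1 : Polynomial F) ∣ (X ^ N - 1) := by
      obtain ⟨k, hk⟩ : orderOf (lam i) * m i ∣ N := hN ▸ Finset.dvd_lcm (Finset.mem_univ i)
      have h := sub_dvd_pow_sub_pow (X ^ (orderOf (lam i) * m i) : Polynomial F) 1 k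
      rwa [← pow_mul, one_pow, ← hk] at h
    exact h1.trans h2
  set δ : Fin ℓ → Polynomial F :=
    fun i => (X ^ N - 1) / (X ^ (m i) - Polynomial.C (lam i)) with hδdef
  have hδ : ∀ i, δ i * (X ^ (m i) - Polynomial.C (lam i)) = X ^ N - 1 := by
    intro i
    rw [hδdef, mul_comm]
    exact EuclideanDomain.mul_div_cancel' (hdne i) (hdvd i)
  have hΔD : Matrix.diagonal δ *
      Matrix.diagonal (fun i => X ^ (m i) - Polynomial.C (lam i)) =
      (X ^ N - 1 : Polynomial F) • 1 := by
    have he : (fun i => δ i * (X ^ (m i) - Polynomial.C (lam i)))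
        = fun _ : Fin ℓ => (X ^ N - 1 : Polynomial F) := funext hδ
    rw [Matrix.diagonal_mul_diagonal, he, Matrix.smul_one_eq_diagonal]
  -- determinants
  have hdetG₁ : G₁.det ≠ 0 := by
    have h := congrArg Matrix.det hA₁
    rw [Matrix.det_mul, Matrix.det_diagonal] at h
    intro h0
    rw [h0, mul_zero] at h
    exact (Finset.prod_ne_zero_iff.mpr fun i _ => hdne i) h.symm
  have hdetG₂ : G₂.det ≠ 0 := by
    have h := congrArg Matrix.det hA₂
    rw [Matrix.det_mul, Matrix.det_diagonal] at h
    intro h0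
    rw [h0, mul_zero] at h
    exact (Finset.prod_ne_zero_iff.mpr fun i _ => hdne i) h.symm
  have hdetPQ : P.det * Qm.det ≠ 0 := by
    have h := congrArg Matrix.det hPQ
    rw [Matrix.det_mul, Matrix.det_diagonal] at h
    rw [h]
    exact Finset.prod_ne_zero_iff.mpr fun i _ => hXN
  have hdetP : P.det ≠ 0 := fun h0 => hdetPQ (by rw [h0, zero_mul])
  have hdetQm : Qm.det ≠ 0 := fun h0 => hdetPQ (by rw [h0, mul_zero])
  -- flipped identities
  have hPQ' : P * Qm = (X ^ N - 1 : Polynomial F) • 1 := by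
    rw [hPQ, Matrix.smul_one_eq_diagonal]
  have hQmP : Qm * P = (X ^ N - 1 : Polynomial F) • 1 :=
    mul_flip_of_mul_eq_smul_one hdetQm hPQ'
  have hG₁flip : G₁ * (Matrix.diagonal δ * A₁) = (X ^ N - 1 : Polynomial F) • 1 := by
    refine mul_flip_of_mul_eq_smul_one hdetG₁ ?_
    rw [Matrix.mul_assoc, hA₁, hΔD]
  -- the key matrix M₁ and the stacked rows
  set M₁ : Matrix (Fin ℓ) (Fin ℓ) (Polynomial F) := G₂ * Matrix.diagonal δ * A₁ with hM₁def
  have hstackmat : A₁.transpose * Matrix.diagonal δ * G₂.transpose = M₁.transpose := by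
    rw [hM₁def, Matrix.transpose_mul, Matrix.transpose_mul, Matrix.diagonal_transpose,
      Matrix.mul_assoc]
  rw [hstackmat] at hQspan
  set rows : Fin ℓ ⊕ Fin ℓ → Fin ℓ → Polynomial F :=
    fun r => Matrix.fromRows M₁.transpose
      ((X ^ N - 1 : Polynomial F) • (1 : Matrix (Fin ℓ) (Fin ℓ) (Polynomial F))) r with hrows
  -- all (X^N-1)-multiples lie in the span of the stacked rows
  have hkerrows : ∀ q : Fin ℓ → Polynomial F,
      (∀ i, (X ^ N - Polynomial.C (1 : F)) ∣ q i) →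
      q ∈ Submodule.span (Polynomial F) (Set.range rows) := by
    intro q hq
    simp only [Polynomial.C_1] at hq
    choose h hh using hq
    rw [hrows, mem_span_rows_iff]
    refine ⟨Sum.elim 0 h, ?_⟩
    rw [_root_.vecMul_fromRows, Matrix.zero_vecMul, zero_add, vecMul_smul_mat, Matrix.vecMul_one]
    funext j
    exact (hh j).symm
  -- span of rows of Qm = span of the stacked rows
  have hspanEq : Submodule.span (Polynomial F) (Set.range fun i => Qm i)
      = Submodule.span (Polynomial F) (Set.range rows) := by
    apply SetLike.coe_injective
    rw [hQspan]
    ext q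
    exact mem_genCode_iff hN0 rows hkerrows q
  -- extract V₁ with V₁ * Qm = M₁ᵀ
  have hsub2 : ∀ i : Fin ℓ, ∃ v : Fin ℓ → Polynomial F, v ᵥ* Qm = M₁.transpose i := by
    intro i
    have hmem : M₁.transpose i ∈ Submodule.span (Polynomial F) (Set.range fun i => Qm i) := by
      rw [hspanEq]
      exact Submodule.subset_span ⟨Sum.inl i, rfl⟩
    exact mem_span_rows_iff.mp hmem
  choose V₁f hV using hsub2
  set V₁ : Matrix (Fin ℓ) (Fin ℓ) (Polynomial F) := Matrix.of V₁f with hV₁def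
  have hV₁ : V₁ * Qm = M₁.transpose := by
    funext i j
    rw [row_mul]
    exact congrFun (hV i) j
  -- decompose Qm over the stacked rows
  have hsub1 : ∀ i : Fin ℓ, ∃ u₁ u₂ : Fin ℓ → Polynomial F,
      Qm i = u₁ ᵥ* M₁.transpose + (X ^ N - 1 : Polynomial F) • u₂ := by
    intro i
    have hmem : Qm i ∈ Submodule.span (Polynomial F) (Set.range rows) := by
      rw [← hspanEq]
      exact Submodule.subset_span ⟨i, rfl⟩
    rw [hrows, mem_span_rows_iff] at hmem
    obtain ⟨c, hc⟩ := hmem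
    refine ⟨c ∘ Sum.inl, c ∘ Sum.inr, ?_⟩
    rw [← hc, vecMul_fromRows', vecMul_smul_mat, Matrix.vecMul_one]
  choose U₁f U₂f hU using hsub1
  set U₁ : Matrix (Fin ℓ) (Fin ℓ) (Polynomial F) := Matrix.of U₁f with hU₁def
  set U₂ : Matrix (Fin ℓ) (Fin ℓ) (Polynomial F) := Matrix.of U₂f with hU₂def
  have hQmdecomp : Qm = U₁ * M₁.transpose + (X ^ N - 1 : Polynomial F) • U₂ := by
    funext i j
    have h := congrFun (hU i) j
    rw [Matrix.add_apply, row_mul]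
    exact h
  -- the key identity : Pᵀ * G₂ = V₁ᵀ * G₁
  have hPM : P.transpose * M₁ = (X ^ N - 1 : Polynomial F) • V₁.transpose := by
    have hM₁alt : M₁ = Qm.transpose * V₁.transpose := by
      rw [← Matrix.transpose_mul, hV₁, Matrix.transpose_transpose]
    rw [hM₁alt, ← Matrix.mul_assoc]
    have h : P.transpose * Qm.transpose = (X ^ N - 1 : Polynomial F) • 1 := by
      rw [← Matrix.transpose_mul, hQmP, Matrix.transpose_smul, Matrix.transpose_one]
    rw [h, Matrix.smul_mul, Matrix.one_mul]
  have hPG : P.transpose * G₂ = V₁.transpose * G₁ := by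
    apply smul_mat_cancel hXN
    calc (X ^ N - 1 : Polynomial F) • (P.transpose * G₂)
        = P.transpose * G₂ * ((X ^ N - 1 : Polynomial F) • 1) := by
          rw [Matrix.mul_smul, Matrix.mul_one]
      _ = P.transpose * G₂ * (Matrix.diagonal δ * A₁ * G₁) := by
          rw [Matrix.mul_assoc (Matrix.diagonal δ), hA₁, hΔD]
      _ = P.transpose * (G₂ * Matrix.diagonal δ * A₁) * G₁ := by
          simp only [Matrix.mul_assoc]
      _ = (P.transpose * M₁) * G₁ := by rw [hM₁def]
      _ = ((X ^ N - 1 : Polynomial F) • V₁.transpose) * G₁ := by rw [hPM]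
      _ = (X ^ N - 1 : Polynomial F) • (V₁.transpose * G₁) := Matrix.smul_mul _ _ _
  -- conclusion
  refine ⟨?_, ?_⟩
  · -- linear independence
    apply li_rows_of_det_ne_zero
    rw [Matrix.det_mul, Matrix.det_transpose]
    exact mul_ne_zero hdetP hdetG₂
  · -- the span
    ext q
    have h1 : q ∈ (Submodule.span (Polynomial F) (Set.range fun i => G₁ i) :
        Set (Fin ℓ → Polynomial F)) ↔ toCode lam m q ∈ C₁ := Set.ext_iff.mp hG₁span q
    have h2 : q ∈ (Submodule.span (Polynomial F) (Set.range fun i => G₂ i) :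
        Set (Fin ℓ → Polynomial F)) ↔ toCode lam m q ∈ C₂ := Set.ext_iff.mp hG₂span q
    simp only [Set.mem_setOf_eq, SetLike.mem_coe, Submodule.mem_inf] at h1 h2 ⊢
    rw [← h1, ← h2]
    constructor
    · intro hmem
      obtain ⟨w, hw⟩ := mem_span_rows_iff.mp hmem
      constructor
      · refine mem_span_rows_iff.mpr ⟨w ᵥ* V₁.transpose, ?_⟩
        rw [Matrix.vecMul_vecMul, ← hPG, ← hw]
      · refine mem_span_rows_iff.mpr ⟨w ᵥ* P.transpose, ?_⟩
        rw [Matrix.vecMul_vecMul, ← hw]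
    · rintro ⟨hmem1, hmem2⟩
      obtain ⟨b, hb⟩ := mem_span_rows_iff.mp hmem1
      obtain ⟨a, ha⟩ := mem_span_rows_iff.mp hmem2
      have haM : a ᵥ* M₁ = (X ^ N - 1 : Polynomial F) • b := by
        calc a ᵥ* M₁ = a ᵥ* (G₂ * (Matrix.diagonal δ * A₁)) := by
              rw [hM₁def, Matrix.mul_assoc]
          _ = (a ᵥ* G₂) ᵥ* (Matrix.diagonal δ * A₁) := (Matrix.vecMul_vecMul _ _ _).symm
          _ = (b ᵥ* G₁) ᵥ* (Matrix.diagonal δ * A₁) := by rw [ha, hb]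
          _ = b ᵥ* (G₁ * (Matrix.diagonal δ * A₁)) := Matrix.vecMul_vecMul _ _ _
          _ = b ᵥ* ((X ^ N - 1 : Polynomial F) • 1) := by rw [hG₁flip]
          _ = (X ^ N - 1 : Polynomial F) • b := by rw [vecMul_smul_mat, Matrix.vecMul_one]
      have hQmT : Qm.transpose = M₁ * U₁.transpose
          + (X ^ N - 1 : Polynomial F) • U₂.transpose := by
        rw [hQmdecomp, Matrix.transpose_add, Matrix.transpose_mul,
          Matrix.transpose_transpose, Matrix.transpose_smul]
      have haQ : a ᵥ* Qm.transpose
          = (X ^ N - 1 : Polynomial F) • (b ᵥ* U₁.transpose + a ᵥ* U₂.transpose) := by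
        calc a ᵥ* Qm.transpose
            = a ᵥ* (M₁ * U₁.transpose) + a ᵥ* ((X ^ N - 1 : Polynomial F) • U₂.transpose) := by
              rw [hQmT, Matrix.vecMul_add]
          _ = (a ᵥ* M₁) ᵥ* U₁.transpose
              + (X ^ N - 1 : Polynomial F) • (a ᵥ* U₂.transpose) := by
              rw [← Matrix.vecMul_vecMul, vecMul_smul_mat]
          _ = (X ^ N - 1 : Polynomial F) • (b ᵥ* U₁.transpose)
              + (X ^ N - 1 : Polynomial F) • (a ᵥ* U₂.transpose) := by
              rw [haM, Matrix.smul_vecMul]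
          _ = _ := (smul_add _ _ _).symm
      have hwP : (b ᵥ* U₁.transpose + a ᵥ* U₂.transpose) ᵥ* P.transpose = a := by
        apply smul_vec_cancel hXN
        calc (X ^ N - 1 : Polynomial F) • ((b ᵥ* U₁.transpose + a ᵥ* U₂.transpose) ᵥ* P.transpose)
            = ((X ^ N - 1 : Polynomial F) • (b ᵥ* U₁.transpose + a ᵥ* U₂.transpose)) ᵥ* P.transpose :=
              (Matrix.smul_vecMul _ _ _).symm
          _ = (a ᵥ* Qm.transpose) ᵥ* P.transpose := by rw [haQ]
          _ = a ᵥ* (Qm.transpose * P.transpose) := Matrix.vecMul_vecMul _ _ _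
          _ = a ᵥ* ((X ^ N - 1 : Polynomial F) • 1) := by
              rw [← Matrix.transpose_mul, hPQ', Matrix.transpose_smul, Matrix.transpose_one]
          _ = (X ^ N - 1 : Polynomial F) • a := by rw [vecMul_smul_mat, Matrix.vecMul_one]
      refine mem_span_rows_iff.mpr ⟨b ᵥ* U₁.transpose + a ᵥ* U₂.transpose, ?_⟩
      rw [← Matrix.vecMul_vecMul, hwP, ha]
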